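/- Let X be a real Banach space and X* its dual, equipped with the weak* topology σ(X*, X). Suppose every nonempty weak*-compact convex set in X* is almost remotal (its set D(K) of points of X* admitting a farthest point in K contains a dense Gδ subset of X*). Then X* has the w*-MIP (every weak*-compact convex set in X* is the intersection of all closed dual balls containing it) if and only if every nonempty weak*-compact convex set in X* is the weak*-closed convex hull of its set of farthest points. -/

import Mathlib

open Metric Set Pointwise

/-- The farthest distance map `r_K(x) = sup {‖z - x‖ : z ∈ K}`. -/
noncomputable def rFar {X : Type*} [NormedAddCommGroup X] (K : Set X) (x : X) : ℝ :=
  sSup ((fun z => ‖z - x‖) '' K)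

/-- `Q_K(x)`: the set of points of `K` farthest from `x`. -/
def QFar {X : Type*} [NormedAddCommGroup X] (K : Set X) (x : X) : Set X :=
  {z ∈ K | ‖z - x‖ = rFar K x}

/-- `D(K)`: the set of points admitting a farthest point in `K`. -/
def DFar {X : Type*} [NormedAddCommGroup X] (K : Set X) : Set X :=
  {x | (QFar K x).Nonempty}

/-- `b(K)`: the set of farthest points of `K`. -/
def farPoints {X : Type*} [NormedAddCommGroup X] (K : Set X) : Set X :=
  ⋃ x ∈ DFar K, QFar K x

/-- The crescent `C(K, x, α) = {z ∈ K : ‖z - x‖ > r_K(x) - α}`. -/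
def crescent {X : Type*} [NormedAddCommGroup X] (K : Set X) (x : X) (α : ℝ) : Set X :=
  {z ∈ K | rFar K x - α < ‖z - x‖}

/-- Property (R): every crescent of `K` contains a farthest point of `K`. -/
def PropR {X : Type*} [NormedAddCommGroup X] (K : Set X) : Prop :=
  ∀ (x : X) (α : ℝ), 0 < α → ∃ z ∈ crescent K x α, z ∈ farPoints K

/-- A set is admissible if it is the intersection of all closed balls containing it. -/
def Admissible {X : Type*} [NormedAddCommGroup X] (K : Set X) : Prop :=
  K = ⋂ p ∈ {p : X × ℝ | K ⊆ closedBall p.1 p.2}, closedBall p.1 p.2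

/-- The weak* topology `σ(X*, X)` on the dual `X* = X →L[ℝ] ℝ`. -/
def wstarTop (X : Type*) [NormedAddCommGroup X] [NormedSpace ℝ X] :
    TopologicalSpace (X →L[ℝ] ℝ) :=
  TopologicalSpace.induced (fun f : X →L[ℝ] ℝ => fun x : X => f x) inferInstance

/-! ### Auxiliary material -/

/-- View a set of continuous linear functionals as a subset of the weak dual.  This is the
identity on elements, but changes the topology used by topological predicates. -/
def toW {X : Type*} [NormedAddCommGroup X] [NormedSpace ℝ X]
    (s : Set (X →L[ℝ] ℝ)) : Set (WeakDual ℝ X) := s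

section Aux

variable {X : Type*} [NormedAddCommGroup X] [NormedSpace ℝ X]

lemma farPoints_subset (K : Set (X →L[ℝ] ℝ)) : farPoints K ⊆ K := by
  intro z hz
  rcases mem_iUnion₂.1 hz with ⟨y, _, hzQ⟩
  exact hzQ.1

lemma bddAbove_rFarImage {K : Set (X →L[ℝ] ℝ)} {M : ℝ}
    (hb : ∀ f ∈ K, ‖f‖ ≤ M) (x : X →L[ℝ] ℝ) :
    BddAbove ((fun z => ‖z - x‖) '' K) := by
  refine ⟨M + ‖x‖, ?_⟩
  rintro _ ⟨z, hz, rfl⟩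
  calc ‖z - x‖ ≤ ‖z‖ + ‖x‖ := norm_sub_le _ _
    _ ≤ M + ‖x‖ := by have := hb z hz; linarith

lemma norm_sub_le_rFar {K : Set (X →L[ℝ] ℝ)} {M : ℝ}
    (hb : ∀ f ∈ K, ‖f‖ ≤ M) {z : X →L[ℝ] ℝ} (hz : z ∈ K) (x : X →L[ℝ] ℝ) :
    ‖z - x‖ ≤ rFar K x :=
  le_csSup (bddAbove_rFarImage hb x) ⟨z, hz, rfl⟩

lemma rFar_le_of {K : Set (X →L[ℝ] ℝ)} (hne : K.Nonempty) {x : X →L[ℝ] ℝ} {c : ℝ}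
    (h : ∀ z ∈ K, ‖z - x‖ ≤ c) : rFar K x ≤ c := by
  refine csSup_le (hne.image _) ?_
  rintro _ ⟨z, hz, rfl⟩
  exact h z hz

/-- Norm boundedness of weak-star compact sets (uniform boundedness principle). -/
lemma norm_bound_of_wcompact [CompleteSpace X] {K : Set (X →L[ℝ] ℝ)}
    (hK : IsCompact (toW K)) : ∃ M : ℝ, 0 ≤ M ∧ ∀ f ∈ K, ‖f‖ ≤ M := by
  have hpt : ∀ x : X, ∃ C, ∀ i : K, ‖(i : X →L[ℝ] ℝ) x‖ ≤ C := by
    intro x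
    have hco : IsCompact ((fun f : WeakDual ℝ X => f x) '' toW K) :=
      hK.image (WeakDual.eval_continuous x)
    obtain ⟨C, hC⟩ := hco.isBounded.subset_closedBall 0
    refine ⟨C, fun i => ?_⟩
    have := hC (mem_image_of_mem _ (i.2 : (i : X →L[ℝ] ℝ) ∈ toW K))
    simp [Real.norm_eq_abs, Real.dist_eq] at this
    exact this
  obtain ⟨C', hC'⟩ := banach_steinhaus (g := fun i : K => (i : X →L[ℝ] ℝ)) hpt
  exact ⟨max C' 0, le_max_right _ _, fun f hf => le_trans (hC' ⟨f, hf⟩) (le_max_left _ _)⟩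

/-- Almost remotality (density of `DFar`) implies property (R). -/
lemma propR_of_dense {K : Set (X →L[ℝ] ℝ)} {M : ℝ}
    (hb : ∀ f ∈ K, ‖f‖ ≤ M) (hne : K.Nonempty) {G : Set (X →L[ℝ] ℝ)}
    (hG : G ⊆ DFar K) (hd : Dense G) : PropR K := by
  intro x α hα
  obtain ⟨y, hyG, hyb⟩ :=
    hd.exists_mem_open Metric.isOpen_ball (Metric.nonempty_ball.2 (by linarith : 0 < α / 2))
  obtain ⟨z, hzQ⟩ := hG hyG
  have hzK : z ∈ K := hzQ.1
  have hxy : ‖y - x‖ < α / 2 := by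
    have := (Metric.mem_ball.1 hyb)
    rwa [dist_eq_norm] at this
  have h1 : rFar K x ≤ rFar K y + ‖y - x‖ := by
    refine rFar_le_of hne fun w hw => ?_
    calc ‖w - x‖ ≤ ‖w - y‖ + ‖y - x‖ := by
          have := norm_add_le (w - y) (y - x); simpa using this
      _ ≤ rFar K y + ‖y - x‖ := by linarith [norm_sub_le_rFar hb hw y]
  have h2 : ‖z - y‖ ≤ ‖z - x‖ + ‖y - x‖ := by
    have := norm_add_le (z - x) (x - y)
    have hrev : ‖x - y‖ = ‖y - x‖ := norm_sub_rev _ _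
    simpa [hrev] using this
  refine ⟨z, ⟨hzK, ?_⟩, ?_⟩
  · have h3 : ‖z - y‖ = rFar K y := hzQ.2
    linarith
  · exact mem_iUnion₂.2 ⟨y, ⟨z, hzQ⟩, hzQ⟩

end Aux

set_option maxHeartbeats 2000000 in
/-- Theorem far2 (abstract form): if every nonempty w*-compact convex set in `X*` is almost
remotal, then `X*` has the w*-MIP iff every nonempty w*-compact convex set in `X*` is the
w*-closed convex hull of its farthest points. -/
theorem stmt_19 {X : Type*} [NormedAddCommGroup X] [NormedSpace ℝ X] [CompleteSpace X]
    (har : ∀ K : Set (X →L[ℝ] ℝ), @IsCompact _ (wstarTop X) K → Convex ℝ K → K.Nonempty →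
      ∃ G : Set (X →L[ℝ] ℝ), G ⊆ DFar K ∧ Dense G ∧ IsGδ G) :
    (∀ K : Set (X →L[ℝ] ℝ), @IsCompact _ (wstarTop X) K → Convex ℝ K → Admissible K) ↔
    (∀ K : Set (X →L[ℝ] ℝ), @IsCompact _ (wstarTop X) K → Convex ℝ K → K.Nonempty →
      K = @closure _ (wstarTop X) (convexHull ℝ (farPoints K))) := by
  constructor
  · -- w*-MIP ⟹ farthest point representation
    intro hMIP K hKc hKv hKne
    have hKc' : IsCompact (toW K) := hKc
    obtain ⟨M, hM0, hb⟩ := norm_bound_of_wcompact hKc'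
    obtain ⟨G, hG, hd, -⟩ := har K hKc hKv hKne
    have hPropR : PropR K := propR_of_dense hb hKne hG hd
    set Lc := convexHull ℝ (farPoints K) with hLc
    have hLK : closure (toW Lc) ⊆ toW K :=
      closure_minimal (convexHull_min (farPoints_subset K) hKv) hKc'.isClosed
    have hLcomp : IsCompact (closure (toW Lc)) :=
      hKc'.of_isClosed_subset isClosed_closure hLK
    have hLconv : Convex ℝ (closure (toW Lc)) :=
      Convex.closure (by exact (convex_convexHull ℝ (farPoints K) : Convex ℝ Lc))
    have hLK2 : @closure _ (wstarTop X) Lc ⊆ K := hLK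
    refine Set.Subset.antisymm ?_ hLK2
    intro x0 hx0
    by_contra hx0L
    have hLcomp2 : @IsCompact _ (wstarTop X) (@closure _ (wstarTop X) Lc) := hLcomp
    have hLconv2 : Convex ℝ (@closure _ (wstarTop X) Lc) := hLconv
    have hAdm : Admissible (@closure _ (wstarTop X) Lc) := hMIP _ hLcomp2 hLconv2
    rw [show (@closure _ (wstarTop X) Lc = _) from hAdm] at hx0L
    simp only [mem_iInter, mem_setOf_eq, not_forall] at hx0L
    obtain ⟨⟨p, r⟩, hLb, hx0b⟩ := hx0L
    have hr : r < ‖x0 - p‖ := by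
      have : ¬ dist x0 p ≤ r := fun h => hx0b (Metric.mem_closedBall.2 h)
      rw [dist_eq_norm] at this
      linarith [not_le.1 this]
    have hrK : ‖x0 - p‖ ≤ rFar K p := norm_sub_le_rFar hb hx0 p
    obtain ⟨z, hzc, hzfar⟩ := hPropR p (rFar K p - r) (by linarith)
    have hsubcl : toW Lc ⊆ closure (toW Lc) := subset_closure
    have hzL : z ∈ closure (toW Lc) := hsubcl (show z ∈ Lc from subset_convexHull ℝ _ hzfar)
    have hzb : ‖z - p‖ ≤ r := by
      have := hLb hzL
      rwa [Metric.mem_closedBall, dist_eq_norm] at this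
    have : rFar K p - (rFar K p - r) < ‖z - p‖ := hzc.2
    linarith
  · -- farthest point representation ⟹ w*-MIP
    intro hRep K hKc hKv
    have hKc' : IsCompact (toW K) := hKc
    refine Set.Subset.antisymm (Set.subset_iInter₂ fun p hp => hp) ?_
    intro x0 hx0
    rcases eq_empty_or_nonempty K with hKe | hKne
    · exfalso
      have hmem : ((0 : X →L[ℝ] ℝ), (-1 : ℝ)) ∈ {p : (X →L[ℝ] ℝ) × ℝ | K ⊆ closedBall p.1 p.2} := by
        simp [hKe]
      have := mem_iInter₂.1 hx0 _ hmem
      have h1 : dist x0 (0 : X →L[ℝ] ℝ) ≤ (-1 : ℝ) := by simpa using this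
      linarith [dist_nonneg (x := x0) (y := (0 : X →L[ℝ] ℝ))]
    obtain ⟨k0, hk0⟩ := hKne
    by_cases h0 : ∀ f : X →L[ℝ] ℝ, f = 0
    · rw [h0 x0, ← h0 k0]; exact hk0
    push_neg at h0
    obtain ⟨f0, hf0⟩ := h0
    set e : X →L[ℝ] ℝ := ‖f0‖⁻¹ • f0 with he_def
    have he : ‖e‖ = 1 := norm_smul_inv_norm hf0
    obtain ⟨M, hM0, hb⟩ := norm_bound_of_wcompact hKc'
    have hKclosed : IsClosed K :=
      hKc'.isClosed.preimage NormedSpace.Dual.toWeakDual_continuous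
    -- the ball hull of K
    set A := ⋂ p ∈ {p : (X →L[ℝ] ℝ) × ℝ | K ⊆ closedBall p.1 p.2}, closedBall p.1 p.2 with hAdef
    have hxA : x0 ∈ A := hx0
    have hKA : K ⊆ A := Set.subset_iInter₂ fun p hp => hp
    have hAc : IsCompact (toW A) := by
      refine IsCompact.of_isClosed_subset (WeakDual.isCompact_closedBall (𝕜 := ℝ) 0 M) ?_ ?_
      · exact isClosed_biInter fun p hp => (WeakDual.isCompact_closedBall (𝕜 := ℝ) p.1 p.2).isClosed
      · refine iInter₂_subset ((0 : X →L[ℝ] ℝ), M) ?_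
        intro f hf
        rw [Metric.mem_closedBall, dist_eq_norm]
        simpa using hb f hf
    have hAconv : Convex ℝ A :=
      convex_iInter fun p => convex_iInter fun _ => convex_closedBall _ _
    have hAball : ∀ y : X →L[ℝ] ℝ, ∀ a ∈ A, ‖a - y‖ ≤ rFar K y := by
      intro y a ha
      have hmem : (y, rFar K y) ∈ {p : (X →L[ℝ] ℝ) × ℝ | K ⊆ closedBall p.1 p.2} := by
        intro k hk
        rw [Metric.mem_closedBall, dist_eq_norm]
        exact norm_sub_le_rFar hb hk y
      have := mem_iInter₂.1 ha _ hmem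
      rwa [Metric.mem_closedBall, dist_eq_norm] at this
    -- main step : for every s > 0, A ⊆ K + closedBall 0 s
    have key : ∀ s : ℝ, 0 < s → x0 ∈ K + closedBall (0 : X →L[ℝ] ℝ) s := by
      intro s hs
      set Ks := K + closedBall (0 : X →L[ℝ] ℝ) s with hKsdef
      have hKsc : IsCompact (toW Ks) := hKc'.add (WeakDual.isCompact_closedBall (𝕜 := ℝ) 0 s)
      have hKsconv : Convex ℝ Ks := hKv.add (convex_closedBall _ _)
      have hKsub : K ⊆ Ks := by
        intro k hk
        exact ⟨k, hk, 0, Metric.mem_closedBall_self hs.le, add_zero k⟩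
      have hKsb : ∀ w ∈ Ks, ∀ y : X →L[ℝ] ℝ, ‖w - y‖ ≤ rFar K y + s := by
        rintro w ⟨k, hk, u, hu, rfl⟩ y
        have hu' : ‖u‖ ≤ s := by
          have := Metric.mem_closedBall.1 hu
          rwa [dist_eq_norm, sub_zero] at this
        calc ‖k + u - y‖ = ‖(k - y) + u‖ := by rw [add_sub_right_comm]
          _ ≤ ‖k - y‖ + ‖u‖ := norm_add_le _ _
          _ ≤ rFar K y + s := add_le_add (norm_sub_le_rFar hb hk y) hu'
      -- the join W of Ks and A
      set W := (fun p : ℝ × ((X →L[ℝ] ℝ) × (X →L[ℝ] ℝ)) =>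
          p.1 • p.2.1 + (1 - p.1) • p.2.2) '' ((Icc (0:ℝ) 1) ×ˢ (Ks ×ˢ A)) with hWdef
      have hWc : IsCompact (toW W) := by
        have : IsCompact ((fun p : ℝ × (WeakDual ℝ X × WeakDual ℝ X) =>
            p.1 • p.2.1 + (1 - p.1) • p.2.2) '' ((Icc (0:ℝ) 1) ×ˢ (toW Ks ×ˢ toW A))) :=
          (isCompact_Icc.prod (hKsc.prod hAc)).image
            ((continuous_fst.smul continuous_snd.fst).add
              ((continuous_const.sub continuous_fst).smul continuous_snd.snd))
        exact this
      have hW_eq : W = convexJoin ℝ A Ks := by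
        ext z
        constructor
        · rintro ⟨⟨t, w, a⟩, hmem, rfl⟩
          simp only [Set.mem_prod] at hmem
          obtain ⟨ht, hw, ha⟩ := hmem
          refine mem_convexJoin.2 ⟨a, ha, w, hw, ?_⟩
          refine ⟨1 - t, t, by linarith [ht.2], ht.1, by ring, ?_⟩
          show (1 - t) • a + t • w = t • w + (1 - t) • a
          module
        · intro hz
          obtain ⟨a, ha, w, hw, u, v, hu, hv, huv, rfl⟩ := mem_convexJoin.1 hz
          refine ⟨(v, w, a), Set.mk_mem_prod ⟨hv, by linarith⟩ (Set.mk_mem_prod hw ha), ?_⟩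
          show v • w + (1 - v) • a = u • a + v • w
          have huv' : (1 : ℝ) - v = u := by linarith
          rw [huv']
          module
      have hWconv : Convex ℝ W := by
        rw [hW_eq]; exact hAconv.convexJoin hKsconv
      have hKsW : Ks ⊆ W := by
        intro w hw
        refine ⟨(1, w, k0), Set.mk_mem_prod ⟨zero_le_one, le_refl 1⟩
          (Set.mk_mem_prod hw (hKA hk0)), ?_⟩
        show (1 : ℝ) • w + (1 - 1 : ℝ) • k0 = w
        module
      have hAW : A ⊆ W := by
        intro a ha
        refine ⟨(0, k0, a), Set.mk_mem_prod ⟨le_refl 0, zero_le_one⟩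
          (Set.mk_mem_prod (hKsub hk0) ha), ?_⟩
        show (0 : ℝ) • k0 + (1 - 0 : ℝ) • a = a
        module
      have hWne : W.Nonempty := ⟨x0, hAW hxA⟩
      obtain ⟨MW, hMW0, hbW⟩ := norm_bound_of_wcompact hWc
      -- farthest points of W lie in Ks
      have hfar : farPoints W ⊆ Ks := by
        intro z hz
        rcases mem_iUnion₂.1 hz with ⟨y, -, hzW, hzr⟩
        -- lower bound for rFar W y
        have hlow : ∀ k ∈ K, ‖k - y‖ + s ≤ rFar W y := by
          intro k hk
          by_cases hky : k = y
          · have hse : ‖s • e‖ = s := by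
              have h1 : ‖s • e‖ = ‖s‖ * ‖e‖ := norm_smul s e
              rw [h1, he, mul_one, Real.norm_eq_abs, abs_of_pos hs]
            have hmem : k + s • e ∈ Ks := ⟨k, hk, s • e, by
              rw [Metric.mem_closedBall, dist_eq_norm, sub_zero, hse], rfl⟩
            have hval : ‖(k + s • e) - y‖ = ‖k - y‖ + s := by
              subst hky
              have h2 : (k + s • e) - k = s • e := add_sub_cancel_left k (s • e)
              rw [h2, hse, sub_self, norm_zero, zero_add]
            calc ‖k - y‖ + s = ‖(k + s • e) - y‖ := hval.symm
              _ ≤ rFar W y := norm_sub_le_rFar hbW (hKsW hmem) y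
          · have hky' : (0:ℝ) < ‖k - y‖ := norm_pos_iff.2 (sub_ne_zero.2 hky)
            set c := s / ‖k - y‖ with hc_def
            have hc : 0 < c := div_pos hs hky'
            have hcs : c * ‖k - y‖ = s := div_mul_cancel₀ s (ne_of_gt hky')
            have hnc : ‖c • (k - y)‖ = s := by
              have h1 : ‖c • (k - y)‖ = ‖c‖ * ‖k - y‖ := norm_smul c (k - y)
              rw [h1, Real.norm_eq_abs, abs_of_pos hc, hcs]
            have hmem : k + c • (k - y) ∈ Ks := ⟨k, hk, c • (k - y), by
              rw [Metric.mem_closedBall, dist_eq_norm, sub_zero, hnc], rfl⟩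
            have hval : ‖(k + c • (k - y)) - y‖ = ‖k - y‖ + s := by
              have heq : (k + c • (k - y)) - y = (1 + c) • (k - y) := by module
              have h1 : ‖(1 + c) • (k - y)‖ = ‖(1 + c : ℝ)‖ * ‖k - y‖ := norm_smul (1 + c) (k - y)
              rw [heq, h1, Real.norm_eq_abs, abs_of_pos (by linarith : (0:ℝ) < 1 + c)]
              nlinarith [hcs]
            calc ‖k - y‖ + s = ‖(k + c • (k - y)) - y‖ := hval.symm
              _ ≤ rFar W y := norm_sub_le_rFar hbW (hKsW hmem) y
        have hlow2 : rFar K y + s ≤ rFar W y := by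
          have h1 : rFar K y ≤ rFar W y - s := by
            refine rFar_le_of ⟨k0, hk0⟩ fun k hk => ?_
            linarith [hlow k hk]
          linarith
        -- upper bound on ‖z - y‖ in terms of the join parameter
        obtain ⟨⟨t, w, a⟩, hmem, hzeq⟩ := hzW
        simp only [Set.mem_prod] at hmem
        obtain ⟨ht, hw, ha⟩ := hmem
        have hzval : z = t • w + (1 - t) • a := hzeq.symm
        have hWb : ‖w - y‖ ≤ rFar K y + s := hKsb w hw y
        have hAb : ‖a - y‖ ≤ rFar K y := hAball y a ha
        have hzy : ‖z - y‖ ≤ rFar K y + t * s := by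
          have hsplit : z - y = t • (w - y) + (1 - t) • (a - y) := by
            rw [hzval]; module
          have hn1 : ‖t • (w - y)‖ = ‖t‖ * ‖w - y‖ := norm_smul t (w - y)
          have hn2 : ‖(1 - t) • (a - y)‖ = ‖(1 - t : ℝ)‖ * ‖a - y‖ := norm_smul (1 - t) (a - y)
          calc ‖z - y‖ = ‖t • (w - y) + (1 - t) • (a - y)‖ := by rw [hsplit]
            _ ≤ ‖t • (w - y)‖ + ‖(1 - t) • (a - y)‖ := norm_add_le _ _
            _ = t * ‖w - y‖ + (1 - t) * ‖a - y‖ := by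
                rw [hn1, hn2, Real.norm_eq_abs, Real.norm_eq_abs,
                  abs_of_nonneg ht.1, abs_of_nonneg (by linarith [ht.2] : (0:ℝ) ≤ 1 - t)]
            _ ≤ t * (rFar K y + s) + (1 - t) * (rFar K y) := by
                have h1 : t * ‖w - y‖ ≤ t * (rFar K y + s) :=
                  mul_le_mul_of_nonneg_left hWb ht.1
                have h2 : (1 - t) * ‖a - y‖ ≤ (1 - t) * rFar K y :=
                  mul_le_mul_of_nonneg_left hAb (by linarith [ht.2])
                linarith
            _ = rFar K y + t * s := by ring
        have ht1 : t = 1 := by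
          have hzrW : ‖z - y‖ = rFar W y := hzr
          have : rFar K y + s ≤ rFar K y + t * s := by
            calc rFar K y + s ≤ rFar W y := hlow2
              _ = ‖z - y‖ := hzrW.symm
              _ ≤ rFar K y + t * s := hzy
          have hts : s ≤ t * s := by linarith
          have : 1 ≤ t := by nlinarith
          linarith [ht.2]
        have hzw : z = w := by
          rw [hzval, ht1]
          show (1 : ℝ) • w + (1 - 1 : ℝ) • a = w
          module
        rw [hzw]
        exact hw
      -- apply the representation hypothesis to W
      have hWrep := hRep W (hWc : IsCompact (toW W)) hWconv hWne
      have hsub : closure (toW (convexHull ℝ (farPoints W))) ⊆ toW Ks :=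
        closure_minimal (convexHull_min hfar hKsconv) hKsc.isClosed
      have hWKs : W ⊆ Ks := by
        intro z hzW
        rw [hWrep] at hzW
        exact hsub hzW
      exact hWKs (hAW hxA)
    -- conclude via norm closedness of K
    have hx0cl : x0 ∈ closure K := by
      rw [Metric.mem_closure_iff]
      intro ε hε
      obtain ⟨k, hk, u, hu, hku⟩ := key (ε / 2) (by linarith)
      refine ⟨k, hk, ?_⟩
      have hu' : ‖u‖ ≤ ε / 2 := by
        have := Metric.mem_closedBall.1 hu
        rwa [dist_eq_norm, sub_zero] at this
      have : dist x0 k = ‖u‖ := by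
        rw [dist_eq_norm, ← hku, add_sub_cancel_left]
      rw [this]; linarith
    rwa [hKclosed.closure_eq] at hx0cl
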